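/- Fix real constants K > 0, D > 0 and parameters l > 0, L > 0. The function u(x, y) = c_D(l + L − √(x² + y²); l, L) satisfies Δu(x, y) < −K/D at every point (x, y) with 0 < √(x² + y²) < l + L. -/

import Mathlib

open Metric Set Filter
open scoped Matrix RealInnerProductSpace Topology

noncomputable section

/-- The Euclidean plane ℝ². -/
abbrev E2 := EuclideanSpace ℝ (Fin 2)

/-- The Laplacian `c_xx + c_yy` of a function on the plane. -/
noncomputable def lap (c : E2 → ℝ) (p : E2) : ℝ :=
  ∑ i : Fin 2, fderiv ℝ (fun q => fderiv ℝ c q (EuclideanSpace.single i 1)) p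
    (EuclideanSpace.single i 1)

/-- A Poisson solution on a bounded open set `Ω ⊆ ℝ²` (for fixed constants `K, D`):
continuous on the closure of `Ω`, twice continuously differentiable on `Ω`,
satisfying `Δc = -K/D` on `Ω` and `c = 0` on the boundary `∂Ω`. -/
structure IsPoissonSolution (K D : ℝ) (Ω : Set E2) (c : E2 → ℝ) : Prop where
  contOn : ContinuousOn c (closure Ω)
  smooth : ContDiffOn ℝ 2 c Ω
  eqn : ∀ p ∈ Ω, lap c p = -(K / D)
  bdry : ∀ p ∈ frontier Ω, c p = 0

/-- The "open doughnut" radial comparison function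
`c_D(r; l, L) = (K/D)·((l² − r²)/4 + (1/2)·ln(r/l)·(l+L)²)`. -/
noncomputable def cD (K D l L r : ℝ) : ℝ :=
  K / D * ((l ^ 2 - r ^ 2) / 4 + 1 / 2 * Real.log (r / l) * (l + L) ^ 2)

/-- The function `u(x,y) = c_D(l + L − √(x²+y²); l, L)` satisfies
`Δu < −K/D` at every point with `0 < √(x²+y²) < l + L`. -/
theorem hasFDerivAt_norm' {x : E2} (hx : x ≠ 0) :
    HasFDerivAt (fun q : E2 => ‖q‖) (‖x‖⁻¹ • innerSL ℝ x) x := by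
  have h1 : HasFDerivAt (fun q : E2 => ‖q‖ ^ 2) (2 • innerSL ℝ x) x :=
    (hasStrictFDerivAt_norm_sq x).hasFDerivAt
  have hx2 : ‖x‖ ^ 2 ≠ 0 := pow_ne_zero _ (norm_ne_zero_iff.2 hx)
  have h2 := (Real.hasDerivAt_sqrt hx2).comp_hasFDerivAt x h1
  have hxe : Real.sqrt (‖x‖ ^ 2) = ‖x‖ := Real.sqrt_sq (norm_nonneg x)
  have heq : (fun q : E2 => Real.sqrt (‖q‖ ^ 2)) = fun q : E2 => ‖q‖ := by
    funext q; exact Real.sqrt_sq (norm_nonneg q)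
  simp only [Function.comp_def] at h2
  rw [heq, hxe] at h2
  have hn : ‖x‖ ≠ 0 := norm_ne_zero_iff.2 hx
  have hd : ((1 / (2 * ‖x‖)) • (2 • innerSL ℝ x) : E2 →L[ℝ] ℝ) = ‖x‖⁻¹ • innerSL ℝ x := by
    ext v
    simp only [ContinuousLinearMap.smul_apply, ContinuousLinearMap.coe_smul',
      Pi.smul_apply, smul_eq_mul]
    field_simp
    ring
  rw [hd] at h2
  exact h2

def Gd (K D l L t : ℝ) : ℝ := K / D * ((l + L - t) / 2 - (l + L) ^ 2 / (2 * (l + L - t)))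
def Gdd (K D l L t : ℝ) : ℝ := K / D * (-1 / 2 - (l + L) ^ 2 / (2 * (l + L - t) ^ 2))

theorem hasDerivAt_g (K D l L : ℝ) (hl : 0 < l) {t : ℝ} (ht : t < l + L) :
    HasDerivAt (fun s => cD K D l L (l + L - s)) (Gd K D l L t) t := by
  have hs : 0 < l + L - t := by linarith
  have h1 : HasDerivAt (fun s : ℝ => l + L - s) (-1) t := (hasDerivAt_id t).const_sub (l + L)
  have h2 : HasDerivAt (fun s : ℝ => (l ^ 2 - (l + L - s) ^ 2) / 4)
      ((l + L - t) / 2) t := by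
    have : HasDerivAt (fun s : ℝ => (l ^ 2 - (l + L - s) ^ 2) / 4)
        (-(((2:ℕ):ℝ) * (l + L - t) ^ 1 * -1) / 4) t :=
      ((h1.pow 2).const_sub (l ^ 2)).div_const 4
    convert this using 1
    ring
  have hne : (l + L - t) / l ≠ 0 := by positivity
  have hlog : HasDerivAt (fun s : ℝ => Real.log ((l + L - s) / l))
      ((-1 / l) / ((l + L - t) / l)) t := (h1.div_const l).log hne
  have h3 : HasDerivAt (fun s : ℝ => 1 / 2 * Real.log ((l + L - s) / l) * (l + L) ^ 2)
      (1 / 2 * ((-1 / l) / ((l + L - t) / l)) * (l + L) ^ 2) t :=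
    (hlog.const_mul (1 / 2)).mul_const ((l + L) ^ 2)
  have h4 := (h2.add h3).const_mul (K / D)
  have key : K / D * ((l + L - t) / 2 + 1 / 2 * (-1 / l / ((l + L - t) / l)) * (l + L) ^ 2)
      = Gd K D l L t := by
    unfold Gd
    congr 1
    have hl' : l ≠ 0 := ne_of_gt hl
    have hs' : l + L - t ≠ 0 := ne_of_gt hs
    field_simp
    ring
  rw [key] at h4
  exact h4

theorem hasDerivAt_Gd (K D l L : ℝ) {t : ℝ} (ht : t < l + L) :
    HasDerivAt (fun s => Gd K D l L s) (Gdd K D l L t) t := by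
  have hs : (0:ℝ) < l + L - t := by linarith
  have h1 : HasDerivAt (fun s : ℝ => l + L - s) (-1) t := (hasDerivAt_id t).const_sub (l + L)
  have h2 : HasDerivAt (fun s : ℝ => (l + L - s) / 2) (-1 / 2) t := h1.div_const 2
  have hden : HasDerivAt (fun s : ℝ => 2 * (l + L - s)) (2 * (-1)) t := h1.const_mul 2
  have hdne : 2 * (l + L - t) ≠ 0 := by positivity
  have h3 : HasDerivAt (fun s : ℝ => (l + L) ^ 2 / (2 * (l + L - s)))
      ((0 * (2 * (l + L - t)) - (l + L) ^ 2 * (2 * (-1))) / (2 * (l + L - t)) ^ 2) t :=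
    (hasDerivAt_const t ((l + L) ^ 2)).div hden hdne
  have h4 := (h2.sub h3).const_mul (K / D)
  have key : K / D * (-1 / 2 - (0 * (2 * (l + L - t)) - (l + L) ^ 2 * (2 * (-1))) / (2 * (l + L - t)) ^ 2)
      = Gdd K D l L t := by
    unfold Gdd
    congr 1
    have hs' : l + L - t ≠ 0 := ne_of_gt hs
    field_simp
    ring
  rw [key] at h4
  exact h4

theorem cD_reflected_superharmonic (K D l L : ℝ) (hK : 0 < K) (hD : 0 < D)
    (hl : 0 < l) (hL : 0 < L)
    (u : E2 → ℝ) (hudef : u = fun p => cD K D l L (l + L - ‖p‖)) :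
    ∀ p : E2, 0 < ‖p‖ → ‖p‖ < l + L → lap u p < -(K / D) := by
  intro p hr0 hrA
  have hp0 : p ≠ 0 := by
    intro h; rw [h, norm_zero] at hr0; exact lt_irrefl 0 hr0
  -- first derivative on the annulus
  have hu1 : ∀ q : E2, 0 < ‖q‖ → ‖q‖ < l + L →
      HasFDerivAt u ((Gd K D l L ‖q‖ / ‖q‖) • innerSL ℝ q) q := by
    intro q hq0 hqA
    have hqne : q ≠ 0 := by
      intro h; rw [h, norm_zero] at hq0; exact lt_irrefl 0 hq0
    have hn := hasFDerivAt_norm' hqne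
    have hg := hasDerivAt_g K D l L hl hqA
    have hc := hg.comp_hasFDerivAt q hn
    simp only [Function.comp_def] at hc
    rw [hudef]
    have : (Gd K D l L ‖q‖ • (‖q‖⁻¹ • innerSL ℝ q) : E2 →L[ℝ] ℝ)
        = (Gd K D l L ‖q‖ / ‖q‖) • innerSL ℝ q := by
      rw [smul_smul, div_eq_mul_inv]
    rw [← this]
    exact hc
  -- eventual formula for fderiv u
  have hΩ : IsOpen {q : E2 | 0 < ‖q‖ ∧ ‖q‖ < l + L} :=
    (isOpen_lt continuous_const continuous_norm).inter
      (isOpen_lt continuous_norm continuous_const)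
  have hev : ∀ᶠ q in 𝓝 p, fderiv ℝ u q = (Gd K D l L ‖q‖ / ‖q‖) • innerSL ℝ q := by
    filter_upwards [hΩ.mem_nhds ⟨hr0, hrA⟩] with q hq
    exact (hu1 q hq.1 hq.2).fderiv
  -- second derivative along each coordinate
  set r := ‖p‖ with hrdef
  have hrne : r ≠ 0 := ne_of_gt hr0
  have hφ : HasDerivAt (fun t => Gd K D l L t / t)
      ((Gdd K D l L r * r - Gd K D l L r * 1) / r ^ 2) r :=
    (hasDerivAt_Gd K D l L hrA).div (hasDerivAt_id r) hrne
  have hφn := hφ.comp_hasFDerivAt p (hasFDerivAt_norm' hp0)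
  have main : ∀ i : Fin 2,
      fderiv ℝ (fun q => fderiv ℝ u q (EuclideanSpace.single i 1)) p (EuclideanSpace.single i 1)
        = Gd K D l L r / r
          + p i * (((Gdd K D l L r * r - Gd K D l L r * 1) / r ^ 2) * (r⁻¹ * p i)) := by
    intro i
    have hevi : (fun q => fderiv ℝ u q (EuclideanSpace.single i 1))
        =ᶠ[𝓝 p] (fun q => (Gd K D l L ‖q‖ / ‖q‖) * q i) := by
      filter_upwards [hev] with q hq
      rw [hq]
      simp only [ContinuousLinearMap.smul_apply, innerSL_apply_apply, smul_eq_mul,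
        EuclideanSpace.inner_single_right, conj_trivial, one_mul, mul_one]
    have hcoord : HasFDerivAt (fun q : E2 => q i) (EuclideanSpace.proj i (𝕜 := ℝ)) p :=
      (EuclideanSpace.proj i (𝕜 := ℝ)).hasFDerivAt
    have hD2 : HasFDerivAt (fun q : E2 => (Gd K D l L ‖q‖ / ‖q‖) * q i)
        ((Gd K D l L r / r) • (EuclideanSpace.proj i (𝕜 := ℝ))
          + p i • ((((Gdd K D l L r * r - Gd K D l L r * 1) / r ^ 2)) • (r⁻¹ • innerSL ℝ p))) p :=
      hφn.mul hcoord
    rw [hevi.fderiv_eq, hD2.fderiv]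
    have hproj : (EuclideanSpace.proj i (𝕜 := ℝ)) (EuclideanSpace.single i (1:ℝ)) = 1 := by
      simp [EuclideanSpace.proj, EuclideanSpace.single_apply]
    simp only [ContinuousLinearMap.add_apply, ContinuousLinearMap.smul_apply, innerSL_apply_apply,
      smul_eq_mul, EuclideanSpace.inner_single_right, conj_trivial, one_mul, mul_one, hproj]
  -- sum up
  have hnormsq : p 0 ^ 2 + p 1 ^ 2 = r ^ 2 := by
    rw [hrdef, EuclideanSpace.norm_eq, Real.sq_sqrt (by positivity)]
    simp [Fin.sum_univ_two, Real.norm_eq_abs, sq_abs]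
  have hlap : lap u p = Gdd K D l L r + Gd K D l L r / r := by
    unfold lap
    rw [Fin.sum_univ_two, main 0, main 1]
    have e1 : Gd K D l L r / r
          + p 0 * (((Gdd K D l L r * r - Gd K D l L r * 1) / r ^ 2) * (r⁻¹ * p 0))
        + (Gd K D l L r / r
          + p 1 * (((Gdd K D l L r * r - Gd K D l L r * 1) / r ^ 2) * (r⁻¹ * p 1)))
        = 2 * (Gd K D l L r / r)
          + ((Gdd K D l L r * r - Gd K D l L r * 1) / r ^ 2) * r⁻¹ * (p 0 ^ 2 + p 1 ^ 2) := by
      ring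
    rw [e1, hnormsq]
    field_simp
    ring
  rw [hlap]
  -- final inequality
  set s := l + L - r with hsdef
  have hs0 : 0 < s := by simp [hsdef]; linarith
  have hsr : l + L = s + r := by rw [hsdef]; ring
  have hC : 0 < K / D := div_pos hK hD
  have key : (-1 / 2 - (l + L) ^ 2 / (2 * s ^ 2)) + (s / 2 - (l + L) ^ 2 / (2 * s)) / r < -1 := by
    rw [hsr]
    have hsne : s ≠ 0 := ne_of_gt hs0
    have heq : -1 / 2 - (s + r) ^ 2 / (2 * s ^ 2) + (s / 2 - (s + r) ^ 2 / (2 * s)) / r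
        = -1 - (s + r) * (2 * s + r) / (2 * s ^ 2) := by
      field_simp
      ring
    rw [heq]
    have hpos : 0 < (s + r) * (2 * s + r) / (2 * s ^ 2) := by positivity
    linarith
  have hrw : Gdd K D l L r + Gd K D l L r / r
      = K / D * ((-1 / 2 - (l + L) ^ 2 / (2 * s ^ 2)) + (s / 2 - (l + L) ^ 2 / (2 * s)) / r) := by
    unfold Gd Gdd
    rw [hsdef]
    ring
  rw [hrw, show -(K / D) = K / D * (-1) by ring]
  exact mul_lt_mul_of_pos_left key hC
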